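/- For the one-dimensional budgeted set with T periods and integer β ≤ T, the maximum of a nonnegative linear functional Σ_t c_t · (ũ_t − ū_t) over U(β) equals the sum of the β largest values among {c_t û_t : t ∈ T} when all c_t ≥ 0. -/
import Mathlib


def budgetSet1 {T : Type*} [Fintype T] (ub uh : T → ℝ) (β : ℝ) : Set (T → ℝ) :=
  {u | (∀ t, |u t - ub t| ≤ uh t) ∧ ∑ t, |u t - ub t| / uh t ≤ β}

theorem budget_linear_max_eq_sum_largest {T : Type*} [Fintype T] [DecidableEq T]
    (ub uh c : T → ℝ) (huh : ∀ t, 0 < uh t) (hc : ∀ t, 0 ≤ c t)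
    (β : ℕ) (hβ : β ≤ Fintype.card T)
    (hne : ((Finset.univ : Finset T).powersetCard β).Nonempty) :
    IsGreatest ((fun u => ∑ t, c t * (u t - ub t)) '' budgetSet1 ub uh (β : ℝ))
      (((Finset.univ : Finset T).powersetCard β).sup' hne
        (fun A => ∑ t ∈ A, c t * uh t)) := by
  obtain ⟨A, hA, hAeq⟩ := Finset.exists_mem_eq_sup' hne (fun A => ∑ t ∈ A, c t * uh t)
  rw [Finset.mem_powersetCard] at hA
  obtain ⟨-, hAcard⟩ := hA
  constructor
  · refine ⟨fun t => if t ∈ A then ub t + uh t else ub t, ⟨fun t => ?_, ?_⟩, ?_⟩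
    · by_cases h : t ∈ A <;> simp [h, abs_of_nonneg (huh t).le, (huh t).le]
    · have h1 : ∀ t, |(if t ∈ A then ub t + uh t else ub t) - ub t| / uh t
          = if t ∈ A then (1:ℝ) else 0 := by
        intro t
        by_cases h : t ∈ A <;>
          simp [h, abs_of_nonneg (huh t).le, div_self (huh t).ne']
      rw [show (∑ t, |(if t ∈ A then ub t + uh t else ub t) - ub t| / uh t)
          = ∑ t, if t ∈ A then (1:ℝ) else 0 from Finset.sum_congr rfl fun t _ => h1 t]
      rw [Finset.sum_ite_mem, Finset.univ_inter, Finset.sum_const, hAcard]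
      simp
    · show (∑ t, c t * ((if t ∈ A then ub t + uh t else ub t) - ub t)) = _
      rw [hAeq]
      have h1 : ∀ t, c t * ((if t ∈ A then ub t + uh t else ub t) - ub t)
          = if t ∈ A then c t * uh t else 0 := by
        intro t; by_cases h : t ∈ A <;> simp [h]
      rw [show (∑ t, c t * ((if t ∈ A then ub t + uh t else ub t) - ub t))
          = ∑ t, if t ∈ A then c t * uh t else 0
          from Finset.sum_congr rfl fun t _ => h1 t]
      rw [Finset.sum_ite_mem, Finset.univ_inter]
  · rintro v ⟨u, ⟨hu1, hu2⟩, rfl⟩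
    rw [hAeq]
    set w : T → ℝ := fun t => c t * uh t with hw
    have hw0 : ∀ t, 0 ≤ w t := fun t => mul_nonneg (hc t) (huh t).le
    set x : T → ℝ := fun t => |u t - ub t| / uh t with hx
    have hx0 : ∀ t, 0 ≤ x t := fun t => div_nonneg (abs_nonneg _) (huh t).le
    have hx1 : ∀ t, x t ≤ 1 := fun t => (div_le_one (huh t)).2 (hu1 t)
    have habs : ∀ t, |u t - ub t| = x t * uh t :=
      fun t => (div_mul_cancel₀ _ (huh t).ne').symm
    have hstep : ∀ t, c t * (u t - ub t) ≤ w t * x t := by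
      intro t
      calc c t * (u t - ub t) ≤ c t * |u t - ub t| :=
            mul_le_mul_of_nonneg_left (le_abs_self _) (hc t)
        _ = c t * (x t * uh t) := by rw [habs t]
        _ = w t * x t := by rw [hw]; ring
    refine le_trans (Finset.sum_le_sum fun t _ => hstep t) ?_
    have hxsum : ∑ t, x t ≤ (β : ℝ) := hu2
    rcases Nat.eq_zero_or_pos β with hb0 | hbpos
    · have hA0 : A = ∅ := Finset.card_eq_zero.mp (by rw [hAcard, hb0])
      have hxz : ∀ t ∈ (Finset.univ : Finset T), x t = 0 := by
        have hsum0 : ∑ t, x t = 0 := by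
          have : (0:ℝ) ≤ ∑ t, x t := Finset.sum_nonneg fun t _ => hx0 t
          rw [hb0] at hxsum; push_cast at hxsum; linarith
        exact fun t ht => (Finset.sum_eq_zero_iff_of_nonneg fun t _ => hx0 t).mp hsum0 t ht
      rw [hA0]
      simp only [Finset.sum_empty]
      have : ∑ t, w t * x t = 0 :=
        Finset.sum_eq_zero fun t ht => by rw [hxz t ht, mul_zero]
      linarith
    · have hAne : A.Nonempty := Finset.card_pos.mp (by rw [hAcard]; exact hbpos)
      obtain ⟨s₀, hs₀A, hs₀min⟩ := Finset.exists_min_image A w hAne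
      have hkey : ∀ t ∉ A, w t ≤ w s₀ := by
        intro t ht
        have htn : t ∉ A.erase s₀ := fun h => ht (Finset.mem_of_mem_erase h)
        have hB : insert t (A.erase s₀) ∈ (Finset.univ : Finset T).powersetCard β := by
          rw [Finset.mem_powersetCard]
          refine ⟨Finset.subset_univ _, ?_⟩
          rw [Finset.card_insert_of_notMem htn, Finset.card_erase_of_mem hs₀A, hAcard]
          omega
        have hle := Finset.le_sup' (fun A => ∑ t ∈ A, c t * uh t) hB
        rw [hAeq] at hle
        rw [Finset.sum_insert htn, Finset.sum_erase_eq_sub hs₀A] at hle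
        have : c t * uh t ≤ c s₀ * uh s₀ := by linarith
        simpa [hw] using this
      have hm0 : 0 ≤ w s₀ := hw0 s₀
      have hsplit : ∑ t ∈ A, w t * x t + ∑ t ∈ Aᶜ, w t * x t = ∑ t, w t * x t :=
        Finset.sum_add_sum_compl A _
      have h1 : ∑ t ∈ Aᶜ, w t * x t ≤ w s₀ * ∑ t ∈ Aᶜ, x t := by
        rw [Finset.mul_sum]
        exact Finset.sum_le_sum fun t ht =>
          mul_le_mul_of_nonneg_right (hkey t (Finset.mem_compl.mp ht)) (hx0 t)
      have hxsplit : ∑ t ∈ A, x t + ∑ t ∈ Aᶜ, x t = ∑ t, x t :=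
        Finset.sum_add_sum_compl A _
      have h2 : ∑ t ∈ Aᶜ, x t ≤ (β:ℝ) - ∑ t ∈ A, x t := by linarith
      have h3 : (β:ℝ) - ∑ t ∈ A, x t = ∑ t ∈ A, (1 - x t) := by
        rw [Finset.sum_sub_distrib, Finset.sum_const, hAcard, nsmul_eq_mul, mul_one]
      have h23 : w s₀ * ∑ t ∈ Aᶜ, x t ≤ w s₀ * ∑ t ∈ A, (1 - x t) := by
        rw [← h3]; exact mul_le_mul_of_nonneg_left h2 hm0
      have h4 : w s₀ * ∑ t ∈ A, (1 - x t) ≤ ∑ t ∈ A, w t * (1 - x t) := by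
        rw [Finset.mul_sum]
        exact Finset.sum_le_sum fun t ht =>
          mul_le_mul_of_nonneg_right (hs₀min t ht) (by linarith [hx1 t])
      have h5 : ∑ t ∈ A, w t * x t + ∑ t ∈ A, w t * (1 - x t) = ∑ t ∈ A, w t := by
        rw [← Finset.sum_add_distrib]
        exact Finset.sum_congr rfl fun t _ => by ring
      have h6 : ∑ t ∈ A, w t = ∑ t ∈ A, c t * uh t := rfl
      linarith
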